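/- Let m ≥ 1 be a natural number and let ν : Fin m → ℝ satisfy ν j ≥ 1 for every j. Then ∑_j f(ν j) < ∑_j (ν j − 1) + m, where f(ν) = ((ν+1)/2)·log((ν+1)/2) − ((ν−1)/2)·log((ν−1)/2) and log is the natural logarithm (with Real.log 0 = 0 making the formula literal at ν = 1). -/

import Mathlib

lemma entropy_pointwise_lt (x : ℝ) (hx : 1 ≤ x) :
    ((x + 1) / 2) * Real.log ((x + 1) / 2) -
      ((x - 1) / 2) * Real.log ((x - 1) / 2) < x := by
  obtain ⟨b, hb0, rfl⟩ : ∃ b, 0 ≤ b ∧ x = 2 * b + 1 :=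
    ⟨(x - 1) / 2, by linarith, by ring⟩
  have h1 : (2 * b + 1 + 1) / 2 = b + 1 := by ring
  have h2 : (2 * b + 1 - 1) / 2 = b := by ring
  rw [h1, h2]
  rcases eq_or_lt_of_le hb0 with h | hbpos
  · simp [← h]
  · have hA : Real.log (b + 1) ≤ b := by
      have := Real.log_le_sub_one_of_pos (show (0:ℝ) < b + 1 by linarith)
      linarith
    have hB : Real.log (b + 1) - Real.log b < 1 / b := by
      rw [← Real.log_div (by linarith) (ne_of_gt hbpos)]
      have hne : (b + 1) / b ≠ 1 := by
        intro h
        rw [div_eq_one_iff_eq (ne_of_gt hbpos)] at h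
        linarith
      have := Real.log_lt_sub_one_of_pos (show (0:ℝ) < (b + 1) / b by positivity) hne
      have hb' : (b + 1) / b - 1 = 1 / b := by field_simp; ring
      linarith [hb' ▸ this]
    have h3 : b * (Real.log (b + 1) - Real.log b) < 1 := by
      have := mul_lt_mul_of_pos_left hB hbpos
      rwa [mul_one_div, div_self (ne_of_gt hbpos)] at this
    nlinarith [h3, hA]

/-- For m ≥ 1 and ν j ≥ 1 for all j, ∑ f(ν j) < ∑ (ν j − 1) + m, where
f(ν) = ((ν+1)/2) log((ν+1)/2) − ((ν−1)/2) log((ν−1)/2). -/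
theorem sum_entropy_lt_gap_add_modes (m : ℕ) (hm : 1 ≤ m) (ν : Fin m → ℝ)
    (hν : ∀ j, 1 ≤ ν j) :
    ∑ j, (((ν j + 1) / 2) * Real.log ((ν j + 1) / 2) -
        ((ν j - 1) / 2) * Real.log ((ν j - 1) / 2)) <
      ∑ j, (ν j - 1) + m := by
  have hne : (Finset.univ : Finset (Fin m)).Nonempty := by
    have : Nonempty (Fin m) := ⟨⟨0, hm⟩⟩
    exact Finset.univ_nonempty
  have hlt : ∑ j, (((ν j + 1) / 2) * Real.log ((ν j + 1) / 2) -
      ((ν j - 1) / 2) * Real.log ((ν j - 1) / 2)) < ∑ j, ν j :=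
    Finset.sum_lt_sum_of_nonempty hne fun j _ => entropy_pointwise_lt (ν j) (hν j)
  have heq : ∑ j, (ν j - 1) + (m : ℝ) = ∑ j, ν j := by
    rw [Finset.sum_sub_distrib, Finset.sum_const, Finset.card_fin]
    ring
  linarith
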